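/- For any fixed k ≥ 3 and n ≥ 2k+2, the code 𝒱^(k)(n) is expandable: the string w = 11(01)^{⌊(n−4)/2⌋}00 (of length at most n) does not belong to 𝒱^(k)(n), every element of 𝒱^(k)(n) ∪ {w} is bifix-free, for any two distinct elements of 𝒱^(k)(n) ∪ {w} no nonempty prefix of one equals a suffix of the other, and no element of 𝒱^(k)(n) ∪ {w} is a factor of a distinct element. -/

import Mathlib

/-!
Binary strings are modeled as `List Bool`, with `true` = 1 and `false` = 0.
-/

/-- A string `v` is bifix-free if no nonempty proper prefix of `v` equals a
(proper) suffix of `v`. -/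
def BifixFree (v : List Bool) : Prop :=
  ∀ p : List Bool, p ≠ [] → p ≠ v → p <+: v → ¬ p <:+ v

/-- The set `V_n^(k)`: binary strings of length `n` starting with `k` ones,
ending with `k` zeros, whose middle factor `v_{k+1} … v_{n-k}` begins with 0,
ends with 1, and contains neither `k` consecutive 0's nor `k` consecutive 1's. -/
def Vnk (n k : ℕ) : Set (List Bool) :=
  {v | v.length = n ∧
    List.replicate k true <+: v ∧
    List.replicate k false <:+ v ∧
    ((v.drop k).take (n - 2 * k)).head? = some false ∧
    ((v.drop k).take (n - 2 * k)).getLast? = some true ∧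
    ¬ List.replicate k false <:+: ((v.drop k).take (n - 2 * k)) ∧
    ¬ List.replicate k true <:+: ((v.drop k).take (n - 2 * k))}

/-- `𝒱^(k) = ⋃_{i ≥ 2k+2} V_i^(k)`. -/
def VkSet (k : ℕ) : Set (List Bool) := ⋃ i ∈ {i : ℕ | 2 * k + 2 ≤ i}, Vnk i k

/-- `𝒱^(k)(n)`: elements of `𝒱^(k)` of length at most `n`. -/
def VkLe (k n : ℕ) : Set (List Bool) := {v ∈ VkSet k | v.length ≤ n}

/-- The set of binary strings of length `ℓ` that begin with 0, end with 1, and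
contain neither `k` consecutive 0's nor `k` consecutive 1's. -/
def Rset (k ℓ : ℕ) : Set (List Bool) :=
  {w | w.length = ℓ ∧ w.head? = some false ∧ w.getLast? = some true ∧
    ¬ List.replicate k false <:+: w ∧ ¬ List.replicate k true <:+: w}

/-- `r_ℓ^(k)`, with the convention `r_0^(k) = 1`. -/
noncomputable def r (k ℓ : ℕ) : ℕ := if ℓ = 0 then 1 else (Rset k ℓ).ncard

/-- Shifted `k`-generalized Fibonacci numbers: `f_ℓ^(k) = 2^ℓ` for `ℓ ≤ k-1`, and
`f_ℓ^(k) = ∑_{i=1}^{k} f_{ℓ-i}^(k)` for `ℓ ≥ k`. -/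
def f (k : ℕ) : ℕ → ℕ
  | ℓ =>
    if h : ℓ < k then 2 ^ ℓ
    else ∑ i ∈ (Finset.range k).attach, f k (ℓ - (i.1 + 1))
termination_by ℓ => ℓ
decreasing_by
  have hi := i.2
  simp only [Finset.mem_range] at hi
  omega

/-- `S^(k)(n) = ∑_{ℓ=0}^{n} f_ℓ^(k)`. -/
def S (k n : ℕ) : ℕ := ∑ ℓ ∈ Finset.range (n + 1), f k ℓ

/-- `d_ℓ^(k)`: 1 if `ℓ ≡ 0 (mod k)`, -1 if `ℓ ≡ 1 (mod k)`, 0 otherwise. -/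
def d (k ℓ : ℕ) : ℤ := if ℓ % k = 0 then 1 else if ℓ % k = 1 then -1 else 0

/-- A set of binary strings is a cross-fix-free code if every element is
bifix-free and, for any two distinct elements `v, v'`, no nonempty prefix of
`v` (including `v` itself) is a suffix of `v'`, and vice versa. -/
def CrossFixFree (X : Set (List Bool)) : Prop :=
  (∀ v ∈ X, BifixFree v) ∧
  ∀ v ∈ X, ∀ v' ∈ X, v ≠ v' → ∀ p : List Bool, p ≠ [] → p <+: v → ¬ p <:+ v'

/-- A strong cross-fix-free code: cross-fix-free and no codeword is a factor of
another. -/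
def StrongCrossFixFree (X : Set (List Bool)) : Prop :=
  CrossFixFree X ∧ ∀ v ∈ X, ∀ v' ∈ X, v ≠ v' → ¬ v <:+: v'

/-- A Dyck word: equal numbers of 1's and 0's, and every prefix has at least as
many 1's as 0's. -/
def IsDyck (w : List Bool) : Prop :=
  w.count true = w.count false ∧ ∀ p : List Bool, p <+: w → p.count false ≤ p.count true

/-- `𝒟 = { 1α0 : α a Dyck word }`. -/
def Dset : Set (List Bool) := {v | ∃ α : List Bool, IsDyck α ∧ v = true :: (α ++ [false])}

/-- `𝒟(n)`: elements of `𝒟` of length at most `n`. -/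
def DLe (n : ℕ) : Set (List Bool) := {v ∈ Dset | v.length ≤ n}

section Helpers

/-- pointwise values from a prefix -/
lemma pre_get {p v : List Bool} (h : p <+: v) {i : ℕ} (hi : i < p.length) :
    v[i]? = p[i]? := by
  obtain ⟨t, rfl⟩ := h
  rw [List.getElem?_append_left hi]

/-- pointwise values from a suffix -/
lemma suf_get {p v : List Bool} (h : p <:+ v) (i : ℕ) :
    v[v.length - p.length + i]? = p[i]? := by
  obtain ⟨t, rfl⟩ := h
  have h1 : (t ++ p).length - p.length + i = t.length + i := by simp
  rw [h1, List.getElem?_append_right (by omega)]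
  congr 1
  omega

/-- pointwise values from an infix -/
lemma inf_get {p v : List Bool} (h : p <:+: v) :
    ∃ s t : List Bool, v = s ++ p ++ t ∧ s.length + p.length ≤ v.length ∧
      ∀ i, i < p.length → v[s.length + i]? = p[i]? := by
  obtain ⟨s, t, rfl⟩ := h
  refine ⟨s, t, rfl, by simp, fun i hi => ?_⟩
  rw [List.append_assoc, List.getElem?_append_right (by omega),
    List.getElem?_append_left (by omega : s.length + i - s.length < p.length)]
  congr 1
  omega

/-- building an infix of a replicate from pointwise values -/
lemma replicate_infix {c : Bool} {k : ℕ} {L : List Bool} {j : ℕ}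
    (hjk : j + k ≤ L.length) (h : ∀ i, i < k → L[j + i]? = some c) :
    List.replicate k c <:+: L := by
  have hlen : ((L.drop j).take k).length = k := by
    rw [List.length_take, List.length_drop]; omega
  have h1 : (L.drop j).take k = List.replicate k c := by
    rw [List.eq_replicate_iff]
    refine ⟨hlen, fun b hb => ?_⟩
    obtain ⟨i, hi, hbi⟩ := List.mem_iff_getElem.mp hb
    have hik : i < k := hlen ▸ hi
    have h2 : ((L.drop j).take k)[i]? = L[j + i]? := by
      rw [List.getElem?_take, if_pos hik, List.getElem?_drop]
    rw [List.getElem?_eq_getElem hi, hbi, h i hik] at h2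
    exact (Option.some.injEq _ _ ▸ h2)
  rw [← h1]
  exact List.infix_iff_prefix_suffix.mpr ⟨L.drop j, List.take_prefix _ _, List.drop_suffix _ _⟩

end Helpers

section Vfacts

/-- Pointwise facts about elements of `Vnk`. -/
lemma V_facts {k N : ℕ} {v : List Bool} (hk : 3 ≤ k) (hN : 2 * k + 2 ≤ N)
    (hv : v ∈ Vnk N k) :
    v.length = N ∧
    (∀ i, i < k → v[i]? = some true) ∧
    (∀ i, N - k ≤ i → i < N → v[i]? = some false) ∧
    (∀ j, j + k ≤ N → (∀ i, i < k → v[j + i]? = some true) → j = 0) ∧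
    (∀ j, j + k ≤ N → (∀ i, i < k → v[j + i]? = some false) → j = N - k) := by
  simp only [Vnk, Set.mem_setOf_eq] at hv
  obtain ⟨hlen, hpre, hsuf, hhead, hlast, hnf, hnt⟩ := hv
  have hpreL : (List.replicate k true).length = k := List.length_replicate ..
  have hT : ∀ i, i < k → v[i]? = some true := by
    intro i hi
    rw [pre_get hpre (by omega), List.getElem?_replicate, if_pos hi]
  have hF : ∀ i, N - k ≤ i → i < N → v[i]? = some false := by
    intro i h1 h2
    have h3 := suf_get hsuf (i - (N - k))
    rw [List.length_replicate, hlen] at h3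
    have h4 : N - k + (i - (N - k)) = i := by omega
    rw [h4] at h3
    rw [h3, List.getElem?_replicate, if_pos (by omega)]
  -- the middle factor
  set M := (v.drop k).take (N - 2 * k) with hM
  have hMlen : M.length = N - 2 * k := by
    rw [hM, List.length_take, List.length_drop, hlen]; omega
  have hMget : ∀ i, i < N - 2 * k → M[i]? = v[k + i]? := by
    intro i hi
    rw [hM, List.getElem?_take, if_pos hi, List.getElem?_drop]
  have hvk : v[k]? = some false := by
    have h0 := hMget 0 (by omega)
    rw [Nat.add_zero] at h0
    rw [List.head?_eq_getElem?] at hhead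
    rw [← h0, hhead]
  have hvlast : v[N - k - 1]? = some true := by
    rw [List.getLast?_eq_getElem?, hMlen] at hlast
    have := hMget (N - 2 * k - 1) (by omega)
    have h4 : k + (N - 2 * k - 1) = N - k - 1 := by omega
    rw [h4] at this
    rw [← this, hlast]
  refine ⟨hlen, hT, hF, ?_, ?_⟩
  · -- a run of k ones can occur only at position 0
    intro j hj hall
    by_contra hj0
    rcases lt_or_ge k j with hcase | hcase
    · -- j > k
      rcases le_or_gt (j + k) (N - k) with hc2 | hc2
      · -- run lies inside the middle
        exact hnt (replicate_infix (L := M) (j := j - k) (by omega)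
          (fun i hi => by
            rw [hMget (j - k + i) (by omega)]
            have h4 : k + (j - k + i) = j + i := by omega
            rw [h4]; exact hall i hi))
      · -- the run covers position N - k, which is a zero
        have h1 := hall (N - k - j) (by omega)
        have h4 : j + (N - k - j) = N - k := by omega
        rw [h4, hF (N - k) (by omega) (by omega)] at h1
        simp at h1
    · -- 1 ≤ j ≤ k : the run covers position k, which is a zero
      have h1 := hall (k - j) (by omega)
      have h4 : j + (k - j) = k := by omega
      rw [h4, hvk] at h1
      simp at h1
  · -- a run of k zeros can occur only at position N - k
    intro j hj hall
    by_contra hj0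
    rcases lt_or_ge j k with hcase | hcase
    · have h1 := hall 0 (by omega)
      rw [Nat.add_zero, hT j (by omega)] at h1
      simp at h1
    · rcases le_or_gt (j + k) (N - k) with hc2 | hc2
      · exact hnf (replicate_infix (L := M) (j := j - k) (by omega)
          (fun i hi => by
            rw [hMget (j - k + i) (by omega)]
            have h4 : k + (j - k + i) = j + i := by omega
            rw [h4]; exact hall i hi))
      · -- the run covers position N - k - 1, which is a one
        have hjle : j ≤ N - k := by omega
        have hjlt : j < N - k := by omega
        have h1 := hall (N - k - 1 - j) (by omega)
        have h4 : j + (N - k - 1 - j) = N - k - 1 := by omega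
        rw [h4, hvlast] at h1
        simp at h1

end Vfacts

section Wfacts

/-- The special word `w = 11(01)^m 00`. -/
def wlist (m : ℕ) : List Bool :=
  [true, true] ++ (List.replicate m [false, true]).flatten ++ [false, false]

/-- The character of `wlist m` at position `i`. -/
def wf (m i : ℕ) : Bool :=
  if i < 2 then true else if i < 2 * m + 2 then decide (i % 2 = 1) else false

lemma flat_len (m : ℕ) : (List.replicate m [false, true]).flatten.length = 2 * m := by
  induction m with
  | zero => simp
  | succ m ih => rw [List.replicate_succ, List.flatten_cons]; simp [ih]; omega

lemma flat_get? (m : ℕ) : ∀ i, (List.replicate m [false, true]).flatten[i]? =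
    if i < 2 * m then some (decide (i % 2 = 1)) else none := by
  induction m with
  | zero => intro i; simp
  | succ m ih =>
    intro i
    rw [List.replicate_succ, List.flatten_cons]
    match i with
    | 0 => simp
    | 1 => simp; omega
    | (i + 2) =>
      show (false :: true :: (List.replicate m [false, true]).flatten)[i + 2]? = _
      rw [List.getElem?_cons_succ, List.getElem?_cons_succ, ih i]
      have h2 : (i + 2) % 2 = i % 2 := by omega
      rw [h2]
      by_cases h : i < 2 * m
      · rw [if_pos h, if_pos (by omega)]
      · rw [if_neg h, if_neg (by omega)]

lemma wlen (m : ℕ) : (wlist m).length = 2 * m + 4 := by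
  simp [wlist, flat_len]
  omega

lemma wg (m : ℕ) : ∀ i, i < 2 * m + 4 → (wlist m)[i]? = some (wf m i) := by
  intro i hi
  match i with
  | 0 => simp [wlist, wf]
  | 1 => simp [wlist, wf]
  | (i + 2) =>
    show (true :: true :: ((List.replicate m [false, true]).flatten ++ [false, false]))[i + 2]? = _
    rw [List.getElem?_cons_succ, List.getElem?_cons_succ]
    by_cases h : i < 2 * m
    · rw [List.getElem?_append_left (by rw [flat_len]; exact h), flat_get? m i, if_pos h]
      have : wf m (i + 2) = decide (i % 2 = 1) := by
        unfold wf
        rw [if_neg (by omega), if_pos (by omega)]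
        congr 1
        simp [Nat.add_mod_right]
      rw [this]
    · rw [List.getElem?_append_right (by rw [flat_len]; omega), flat_len]
      have hwf : wf m (i + 2) = false := by
        unfold wf
        rw [if_neg (by omega), if_neg (by omega)]
      rw [hwf]
      rcases (show i - 2 * m = 0 ∨ i - 2 * m = 1 by omega) with h2 | h2 <;> rw [h2] <;> rfl

lemma wf_no11 {m j : ℕ} (hm : 1 ≤ m) (hj : j + 2 ≤ 2 * m + 4)
    (h1 : wf m j = true) (h2 : wf m (j + 1) = true) : j = 0 := by
  unfold wf at h1 h2
  split_ifs at h1 h2 <;> simp_all <;> omega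

lemma wf_no111 {m j : ℕ} (hm : 1 ≤ m) (hj : j + 3 ≤ 2 * m + 4)
    (h1 : wf m j = true) (h2 : wf m (j + 1) = true) (h3 : wf m (j + 2) = true) : False := by
  have h0 : j = 0 := wf_no11 hm (by omega) h1 h2
  subst h0
  unfold wf at h3
  rw [if_neg (by omega), if_pos (by omega)] at h3
  simp at h3

lemma wf_no000 {m j : ℕ} (hm : 1 ≤ m) (hj : j + 3 ≤ 2 * m + 4)
    (h1 : wf m j = false) (h2 : wf m (j + 1) = false) (h3 : wf m (j + 2) = false) : False := by
  unfold wf at h1 h2 h3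
  split_ifs at h1 h2 h3 <;> simp_all <;> omega

lemma wf_last (m : ℕ) (hm : 1 ≤ m) :
    wf m (2 * m + 2) = false ∧ wf m (2 * m + 3) = false ∧ wf m (2 * m + 1) = true ∧
    wf m 0 = true ∧ wf m 1 = true ∧ wf m 2 = false := by
  refine ⟨?_, ?_, ?_, ?_, ?_, ?_⟩ <;> unfold wf
  · rw [if_neg (by omega), if_neg (by omega)]
  · rw [if_neg (by omega), if_neg (by omega)]
  · rw [if_neg (by omega), if_pos (by omega)]
    simp
  · rw [if_pos (by omega)]
  · rw [if_pos (by omega)]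
  · rw [if_neg (by omega), if_pos (by omega)]
    rfl

end Wfacts

section Cross

lemma mem_VkLe {k n : ℕ} {v : List Bool} :
    v ∈ VkLe k n ↔ (∃ N, 2 * k + 2 ≤ N ∧ v ∈ Vnk N k) ∧ v.length ≤ n := by
  simp [VkLe, VkSet, Set.mem_setOf_eq]

lemma key1 {k N N' : ℕ} {v v' p : List Bool} (hk : 3 ≤ k) (hN : 2 * k + 2 ≤ N)
    (hN' : 2 * k + 2 ≤ N') (hv : v ∈ Vnk N k) (hv' : v' ∈ Vnk N' k)
    (hp : p ≠ []) (hpre : p <+: v) (hsuf : p <:+ v') : p = v' := by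
  obtain ⟨hlen, hT, hF, hone, hzero⟩ := V_facts hk hN hv
  obtain ⟨hlen', hT', hF', hone', hzero'⟩ := V_facts hk hN' hv'
  have hl1 : 1 ≤ p.length := List.length_pos_iff.mpr hp
  have hlN : p.length ≤ N := hlen ▸ hpre.length_le
  have hlN' : p.length ≤ N' := hlen' ▸ hsuf.length_le
  have hpv : ∀ i, i < p.length → p[i]? = v[i]? := fun i hi => (pre_get hpre hi).symm
  have hpv' : ∀ i, v'[N' - p.length + i]? = p[i]? := by
    intro i
    have h := suf_get hsuf i
    rwa [hlen'] at h
  have hlk : k < p.length := by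
    by_contra h
    push_neg at h
    have h1 : p[0]? = some true := (hpv 0 (by omega)).trans (hT 0 (by omega))
    have h2 : v'[N' - p.length + 0]? = some false := hF' _ (by omega) (by omega)
    rw [hpv' 0, h1] at h2
    simp at h2
  have h0 : N' - p.length = 0 := by
    apply hone' _ (by omega)
    intro i hi
    rw [hpv' i, hpv i (by omega)]
    exact hT i hi
  exact hsuf.eq_of_length (by rw [hlen']; omega)

lemma key2 {k N N' : ℕ} {v v' : List Bool} (hk : 3 ≤ k) (hN : 2 * k + 2 ≤ N)
    (hN' : 2 * k + 2 ≤ N') (hv : v ∈ Vnk N k) (hv' : v' ∈ Vnk N' k)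
    (hpre : v <+: v') : v = v' := by
  obtain ⟨hlen, hT, hF, hone, hzero⟩ := V_facts hk hN hv
  obtain ⟨hlen', hT', hF', hone', hzero'⟩ := V_facts hk hN' hv'
  have hNN' : N ≤ N' := by rw [← hlen, ← hlen']; exact hpre.length_le
  have h0 : N - k = N' - k := by
    apply hzero' _ (by omega)
    intro i hi
    rw [pre_get hpre (by rw [hlen]; omega)]
    exact hF _ (by omega) (by omega)
  exact hpre.eq_of_length (by rw [hlen, hlen']; omega)

lemma bifix_V {k N : ℕ} {v : List Bool} (hk : 3 ≤ k) (hN : 2 * k + 2 ≤ N)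
    (hv : v ∈ Vnk N k) : BifixFree v := by
  intro p hp hpv hpre hsuf
  exact hpv (key1 hk hN hN hv hv hp hpre hsuf)

lemma infix_VV {k N N' : ℕ} {v v' : List Bool} (hk : 3 ≤ k) (hN : 2 * k + 2 ≤ N)
    (hN' : 2 * k + 2 ≤ N') (hv : v ∈ Vnk N k) (hv' : v' ∈ Vnk N' k)
    (hinf : v <:+: v') : v = v' := by
  obtain ⟨hlen, hT, hF, hone, hzero⟩ := V_facts hk hN hv
  obtain ⟨hlen', hT', hF', hone', hzero'⟩ := V_facts hk hN' hv'
  obtain ⟨s, t, heq, hlens, hget⟩ := inf_get hinf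
  have hx : s.length + N ≤ N' := by rw [← hlen, ← hlen']; exact hlens
  have hs0 : s.length = 0 := by
    apply hone' _ (by omega)
    intro i hi
    rw [hget i (by rw [hlen]; omega)]
    exact hT i hi
  have hs : s = [] := List.length_eq_zero_iff.mp hs0
  subst hs
  simp only [List.nil_append] at heq
  exact key2 hk hN hN' hv hv' ⟨t, heq.symm⟩

lemma cross_Vw {k N m : ℕ} {v p : List Bool} (hk : 3 ≤ k) (hN : 2 * k + 2 ≤ N)
    (hm : 2 ≤ m) (hv : v ∈ Vnk N k) (hp : p ≠ []) (hpre : p <+: v)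
    (hsuf : p <:+ wlist m) : False := by
  obtain ⟨hlen, hT, hF, hone, hzero⟩ := V_facts hk hN hv
  have hl1 : 1 ≤ p.length := List.length_pos_iff.mpr hp
  have hlw : p.length ≤ 2 * m + 4 := by rw [← wlen m]; exact hsuf.length_le
  have hpv : ∀ i, i < p.length → p[i]? = v[i]? := fun i hi => (pre_get hpre hi).symm
  have hpw : ∀ i, (wlist m)[2 * m + 4 - p.length + i]? = p[i]? := by
    intro i
    have h := suf_get hsuf i
    rwa [wlen] at h
  have hwtrue : ∀ i, i < p.length → i < k → wf m (2 * m + 4 - p.length + i) = true := by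
    intro i h1 h2
    have h3 := hpw i
    rw [hpv i h1, hT i h2, wg m _ (by omega)] at h3
    simpa using h3
  obtain ⟨w1, w2, w3, w4, w5, w6⟩ := wf_last m (by omega)
  rcases le_or_gt p.length 2 with hc | hc
  · have h := hwtrue 0 (by omega) (by omega)
    rcases (show 2 * m + 4 - p.length + 0 = 2 * m + 2 ∨ 2 * m + 4 - p.length + 0 = 2 * m + 3
      by omega) with h4 | h4
    · rw [h4, w1] at h; simp at h
    · rw [h4, w2] at h; simp at h
  · refine wf_no111 (m := m) (j := 2 * m + 4 - p.length) (by omega) (by omega) ?_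
      (hwtrue 1 (by omega) (by omega)) (hwtrue 2 (by omega) (by omega))
    have h := hwtrue 0 (by omega) (by omega)
    rwa [Nat.add_zero] at h

lemma cross_wV {k N m : ℕ} {v p : List Bool} (hk : 3 ≤ k) (hN : 2 * k + 2 ≤ N)
    (hm : 2 ≤ m) (hv : v ∈ Vnk N k) (hp : p ≠ []) (hpre : p <+: wlist m)
    (hsuf : p <:+ v) : False := by
  obtain ⟨hlen, hT, hF, hone, hzero⟩ := V_facts hk hN hv
  have hl1 : 1 ≤ p.length := List.length_pos_iff.mpr hp
  have hlN : p.length ≤ N := hlen ▸ hsuf.length_le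
  have hlw : p.length ≤ 2 * m + 4 := by rw [← wlen m]; exact hpre.length_le
  have hpw : ∀ i, i < p.length → p[i]? = (wlist m)[i]? := fun i hi => (pre_get hpre hi).symm
  have hpv : ∀ i, v[N - p.length + i]? = p[i]? := by
    intro i
    have h := suf_get hsuf i
    rwa [hlen] at h
  obtain ⟨w1, w2, w3, w4, w5, w6⟩ := wf_last m (by omega)
  rcases le_or_gt p.length k with hc | hc
  · have h1 : p[0]? = some true := by
      rw [hpw 0 (by omega), wg m 0 (by omega), w4]
    have h2 : v[N - p.length + 0]? = some false := hF _ (by omega) (by omega)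
    rw [hpv 0, h1] at h2
    simp at h2
  · have hwfalse : ∀ i, i < 3 → wf m (p.length - k + i) = false := by
      intro i hi
      have h3 := hpv (p.length - k + i)
      have h4 : N - p.length + (p.length - k + i) = N - k + i := by omega
      rw [h4, hF (N - k + i) (by omega) (by omega), hpw _ (by omega),
        wg m _ (by omega)] at h3
      simpa using h3.symm
    refine wf_no000 (m := m) (j := p.length - k) (by omega) (by omega) ?_
      (hwfalse 1 (by omega)) (hwfalse 2 (by omega))
    have h := hwfalse 0 (by omega)
    rwa [Nat.add_zero] at h

lemma V_not_infix_w {k N m : ℕ} {v : List Bool} (hk : 3 ≤ k) (hN : 2 * k + 2 ≤ N)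
    (hm : 2 ≤ m) (hv : v ∈ Vnk N k) (hinf : v <:+: wlist m) : False := by
  obtain ⟨hlen, hT, hF, hone, hzero⟩ := V_facts hk hN hv
  obtain ⟨s, t, heq, hlens, hget⟩ := inf_get hinf
  have hx : s.length + N ≤ 2 * m + 4 := by rw [← hlen, ← wlen m]; exact hlens
  have htrue : ∀ i, i < 3 → wf m (s.length + i) = true := by
    intro i hi
    have h3 := hget i (by omega)
    rw [hT i (by omega), wg m _ (by omega)] at h3
    simpa using h3
  refine wf_no111 (m := m) (j := s.length) (by omega) (by omega) ?_
    (htrue 1 (by omega)) (htrue 2 (by omega))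
  have h := htrue 0 (by omega)
  rwa [Nat.add_zero] at h

lemma w_not_infix_V {k N m : ℕ} {v : List Bool} (hk : 3 ≤ k) (hN : 2 * k + 2 ≤ N)
    (hm : 2 ≤ m) (hbound : N ≤ 2 * m + 5) (hv : v ∈ Vnk N k)
    (hinf : wlist m <:+: v) : False := by
  obtain ⟨hlen, hT, hF, hone, hzero⟩ := V_facts hk hN hv
  obtain ⟨s, t, heq, hlens, hget⟩ := inf_get hinf
  have hx : s.length + (2 * m + 4) ≤ N := by rw [← hlen, ← wlen m]; exact hlens
  obtain ⟨w1, w2, w3, w4, w5, w6⟩ := wf_last m (by omega)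
  rcases (show s.length = 0 ∨ s.length = 1 by omega) with hs | hs
  · have h3 := hget 2 (by rw [wlen]; omega)
    rw [wg m 2 (by omega), w6, hs] at h3
    have h4 : (0 : ℕ) + 2 = 2 := by omega
    rw [h4, hT 2 (by omega)] at h3
    simp at h3
  · have h3 := hget (2 * m + 1) (by rw [wlen]; omega)
    rw [wg m (2 * m + 1) (by omega), w3, hs] at h3
    have h4 : 1 + (2 * m + 1) = 2 * m + 2 := by omega
    rw [h4, hF (2 * m + 2) (by omega) (by omega)] at h3
    simp at h3

lemma bifix_w {m : ℕ} (hm : 2 ≤ m) : BifixFree (wlist m) := by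
  intro p hp hpw hpre hsuf
  have hl1 : 1 ≤ p.length := List.length_pos_iff.mpr hp
  have hlw : p.length ≤ 2 * m + 4 := by rw [← wlen m]; exact hpre.length_le
  have hlt : p.length < 2 * m + 4 := by
    rcases lt_or_eq_of_le hlw with h | h
    · exact h
    · exact absurd (hpre.eq_of_length (by rw [wlen]; omega)) hpw
  have hpw' : ∀ i, i < p.length → p[i]? = (wlist m)[i]? := fun i hi => (pre_get hpre hi).symm
  have hps : ∀ i, (wlist m)[2 * m + 4 - p.length + i]? = p[i]? := by
    intro i
    have h := suf_get hsuf i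
    rwa [wlen] at h
  obtain ⟨w1, w2, w3, w4, w5, w6⟩ := wf_last m (by omega)
  have htrue : ∀ i, i < p.length → i < 2 → wf m (2 * m + 4 - p.length + i) = true := by
    intro i h1 h2
    have h3 := hps i
    rw [hpw' i h1, wg m i (by omega), wg m _ (by omega)] at h3
    rcases (show i = 0 ∨ i = 1 by omega) with h4 | h4 <;> subst h4 <;>
      [rw [w4] at h3; rw [w5] at h3] <;> simpa using h3
  rcases (show p.length = 1 ∨ 2 ≤ p.length by omega) with hc | hc
  · have h := htrue 0 (by omega) (by omega)
    have h4 : 2 * m + 4 - p.length + 0 = 2 * m + 3 := by omega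
    rw [h4, w2] at h
    simp at h
  · have h0 := htrue 0 (by omega) (by omega)
    rw [Nat.add_zero] at h0
    have h1 := htrue 1 (by omega) (by omega)
    have := wf_no11 (m := m) (j := 2 * m + 4 - p.length) (by omega) (by omega) h0 h1
    omega

end Cross

/-- For any `k ≥ 3` and `n ≥ 2k+2`, the code `𝒱^(k)(n)` is
expandable: the string `w = 11(01)^{⌊(n-4)/2⌋}00` has length at most `n`, does
not belong to `𝒱^(k)(n)`, and `𝒱^(k)(n) ∪ {w}` is a strong cross-fix-free code
(all elements bifix-free, no nonempty prefix of one element is a suffix of a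
distinct element, and no element is a factor of a distinct element). -/
theorem stmt_17 (k n : ℕ) (hk : 3 ≤ k) (hn : 2 * k + 2 ≤ n) :
    ([true, true] ++ (List.replicate ((n - 4) / 2) [false, true]).flatten ++
        [false, false]).length ≤ n ∧
    ([true, true] ++ (List.replicate ((n - 4) / 2) [false, true]).flatten ++
        [false, false]) ∉ VkLe k n ∧
    StrongCrossFixFree (VkLe k n ∪
      {[true, true] ++ (List.replicate ((n - 4) / 2) [false, true]).flatten ++
        [false, false]}) := by
  rw [show ([true, true] ++ (List.replicate ((n - 4) / 2) [false, true]).flatten ++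
      [false, false]) = wlist ((n - 4) / 2) from rfl]
  have hn8 : 8 ≤ n := by omega
  set m := (n - 4) / 2 with hm_def
  have hm : 2 ≤ m := by omega
  have hm5 : n ≤ 2 * m + 5 := by omega
  obtain ⟨w1, w2, w3, w4, w5, w6⟩ := wf_last m (by omega)
  refine ⟨by rw [wlen]; omega, ?_, ?_, ?_⟩
  · -- w ∉ VkLe k n
    intro hmem
    obtain ⟨⟨N, hN, hv⟩, _⟩ := mem_VkLe.mp hmem
    obtain ⟨hlen, hT, -⟩ := V_facts hk hN hv
    have hNlen : N = 2 * m + 4 := by rw [← hlen, wlen]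
    have h2 := hT 2 (by omega)
    rw [wg m 2 (by omega), w6] at h2
    simp at h2
  · -- cross-fix-free
    constructor
    · -- bifix-free
      rintro v (hv | hv)
      · obtain ⟨N, hN, hv⟩ := (mem_VkLe.mp hv).1
        exact bifix_V hk hN hv
      · rw [Set.mem_singleton_iff] at hv
        subst hv
        exact bifix_w hm
    · rintro v (hv | hv) v' (hv' | hv') hne p hp hppre hpsuf
      · obtain ⟨N, hN, hvv⟩ := (mem_VkLe.mp hv).1
        obtain ⟨N', hN', hvv'⟩ := (mem_VkLe.mp hv').1
        have h1 : p = v' := key1 hk hN hN' hvv hvv' hp hppre hpsuf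
        subst h1
        exact hne (key2 hk hN' hN hvv' hvv hppre).symm
      · rw [Set.mem_singleton_iff] at hv'
        subst hv'
        obtain ⟨N, hN, hvv⟩ := (mem_VkLe.mp hv).1
        exact cross_Vw hk hN hm hvv hp hppre hpsuf
      · rw [Set.mem_singleton_iff] at hv
        subst hv
        obtain ⟨N', hN', hvv'⟩ := (mem_VkLe.mp hv').1
        exact cross_wV hk hN' hm hvv' hp hppre hpsuf
      · rw [Set.mem_singleton_iff] at hv hv'
        exact hne (hv.trans hv'.symm)
  · -- no factors
    rintro v (hv | hv) v' (hv' | hv') hne hinf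
    · obtain ⟨N, hN, hvv⟩ := (mem_VkLe.mp hv).1
      obtain ⟨N', hN', hvv'⟩ := (mem_VkLe.mp hv').1
      exact hne (infix_VV hk hN hN' hvv hvv' hinf)
    · rw [Set.mem_singleton_iff] at hv'
      subst hv'
      obtain ⟨N, hN, hvv⟩ := (mem_VkLe.mp hv).1
      exact V_not_infix_w hk hN hm hvv hinf
    · rw [Set.mem_singleton_iff] at hv
      subst hv
      obtain ⟨⟨N', hN', hvv'⟩, hlen'⟩ := mem_VkLe.mp hv'
      have hNb : N' ≤ 2 * m + 5 := by
        have := (V_facts hk hN' hvv').1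
        omega
      exact w_not_infix_V hk hN' hm hNb hvv' hinf
    · rw [Set.mem_singleton_iff] at hv hv'
      exact hne (hv.trans hv'.symm)
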